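/- Let h(I₁,I₂,I₃,I₄) = I₂⁵/5 + I₁³/3 − I₁²/2 + I₁I₂/2 − I₃²/2 − I₄ and v = (0, v₂, 0, 0) with v₂ ≠ 0. Then any pair (u, w) of vectors in ℝ⁴ satisfying (at the origin) h¹[u] = 0, h¹[w] = 0, h²[u,v] = 0, h²[w,v] = 0 must satisfy rank(u, v, w) < 3. -/

import Mathlib

set_option maxHeartbeats 1000000
set_option synthInstance.maxHeartbeats 200000

/-- The function `h(I) = I₂⁵/5 + I₁³/3 − I₁²/2 + I₁I₂/2 − I₃²/2 − I₄`. -/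
noncomputable def h : (Fin 4 → ℝ) → ℝ :=
  fun I => (I 1) ^ 5 / 5 + (I 0) ^ 3 / 3 - (I 0) ^ 2 / 2
    + (I 0) * (I 1) / 2 - (I 2) ^ 2 / 2 - I 3

noncomputable def p (i : Fin 4) : (Fin 4 → ℝ) →L[ℝ] ℝ := ContinuousLinearMap.proj i

noncomputable def F (x : Fin 4 → ℝ) : (Fin 4 → ℝ) →L[ℝ] ℝ :=
  (x 1 * x 1 * x 1 * x 1 + x 0 / 2) • p 1 + (x 0 * x 0 - x 0 + x 1 / 2) • p 0
    - (x 2) • p 2 - p 3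

lemma hasFDerivAt_h (x : Fin 4 → ℝ) : HasFDerivAt h (F x) x := by
  have hg : h = fun I : Fin 4 → ℝ =>
      I 1 * I 1 * I 1 * I 1 * I 1 * (1/5) + I 0 * I 0 * I 0 * (1/3) - I 0 * I 0 * (1/2)
        + I 0 * I 1 * (1/2) - I 2 * I 2 * (1/2) - I 3 := by
    funext I; simp only [h]; ring
  rw [hg]
  have e0 : HasFDerivAt (fun I : Fin 4 → ℝ => I 0) (p 0) x := (p 0).hasFDerivAt
  have e1 : HasFDerivAt (fun I : Fin 4 → ℝ => I 1) (p 1) x := (p 1).hasFDerivAt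
  have e2 : HasFDerivAt (fun I : Fin 4 → ℝ => I 2) (p 2) x := (p 2).hasFDerivAt
  have e3 : HasFDerivAt (fun I : Fin 4 → ℝ => I 3) (p 3) x := (p 3).hasFDerivAt
  have H := ((((((((e1.mul e1).mul e1).mul e1).mul e1).mul_const (1/5 : ℝ)).add
      ((((e0.mul e0).mul e0)).mul_const (1/3 : ℝ))).sub ((e0.mul e0).mul_const (1/2 : ℝ))).add
      ((e0.mul e1).mul_const (1/2 : ℝ))).sub ((e2.mul e2).mul_const (1/2 : ℝ)) |>.sub e3
  refine H.congr_fderiv ?_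
  ext y
  simp [F, p]
  ring

noncomputable def G : (Fin 4 → ℝ) →L[ℝ] ((Fin 4 → ℝ) →L[ℝ] ℝ) :=
  (((1 : ℝ) / 2) • p 0).smulRight (p 1) + (-(p 0) + ((1 : ℝ) / 2) • p 1).smulRight (p 0)
    - (p 2).smulRight (p 2)

lemma hasFDerivAt_F : HasFDerivAt F G 0 := by
  have e0 : HasFDerivAt (fun I : Fin 4 → ℝ => I 0) (p 0) (0 : Fin 4 → ℝ) := (p 0).hasFDerivAt
  have e1 : HasFDerivAt (fun I : Fin 4 → ℝ => I 1) (p 1) (0 : Fin 4 → ℝ) := (p 1).hasFDerivAt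
  have e2 : HasFDerivAt (fun I : Fin 4 → ℝ => I 2) (p 2) (0 : Fin 4 → ℝ) := (p 2).hasFDerivAt
  have c1 := (((e1.mul e1).mul e1).mul e1).add (e0.mul_const (1/2 : ℝ))
  have c2 := ((e0.mul e0).sub e0).add (e1.mul_const (1/2 : ℝ))
  have t1 := c1.smul (hasFDerivAt_const (p 1) (0 : Fin 4 → ℝ))
  have t2 := c2.smul (hasFDerivAt_const (p 0) (0 : Fin 4 → ℝ))
  have t3 := e2.smul (hasFDerivAt_const (p 2) (0 : Fin 4 → ℝ))
  have H := ((t1.add t2).sub t3).sub (hasFDerivAt_const (p 3) (0 : Fin 4 → ℝ))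
  have hF : F = fun x : Fin 4 → ℝ => (x 1 * x 1 * x 1 * x 1 + x 0 / 2) • p 1
      + (x 0 * x 0 - x 0 + x 1 / 2) • p 0 - (x 2) • p 2 - p 3 := rfl
  have hF2 : (fun x : Fin 4 → ℝ => (x 1 * x 1 * x 1 * x 1 + x 0 / 2) • p 1
      + (x 0 * x 0 - x 0 + x 1 / 2) • p 0 - (x 2) • p 2 - p 3)
      = fun x : Fin 4 → ℝ => (x 1 * x 1 * x 1 * x 1 + x 0 * (1/2)) • p 1
      + (x 0 * x 0 - x 0 + x 1 * (1/2)) • p 0 - (x 2) • p 2 - p 3 := by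
    funext x; ring_nf
  rw [hF, hF2]
  refine H.congr_fderiv ?_
  ext y z
  simp [G, p]

lemma fderiv_h_eq (x : Fin 4 → ℝ) : fderiv ℝ h x = F x := (hasFDerivAt_h x).fderiv

lemma fderiv2_h : fderiv ℝ (fderiv ℝ h) 0 = G := by
  have : fderiv ℝ h = F := funext fderiv_h_eq
  rw [this]
  exact hasFDerivAt_F.fderiv

/-- For `v = (0, v₂, 0, 0)` with `v₂ ≠ 0`, any pair `(u, w)` solving the system (5)
of the paper at the origin satisfies `rank(u, v, w) < 3`. -/
theorem rank_lt_three_of_system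
    (v₂ : ℝ) (hv₂ : v₂ ≠ 0) (v : Fin 4 → ℝ) (hv : v = ![0, v₂, 0, 0])
    (u w : Fin 4 → ℝ)
    (h1 : fderiv ℝ h 0 u = 0)
    (h2 : fderiv ℝ h 0 w = 0)
    (h3 : iteratedFDeriv ℝ 2 h 0 ![u, v] = 0)
    (h4 : iteratedFDeriv ℝ 2 h 0 ![w, v] = 0) :
    ¬ LinearIndependent ℝ ![u, v, w] := by
  subst hv
  rw [fderiv_h_eq] at h1 h2
  rw [iteratedFDeriv_two_apply, fderiv2_h] at h3 h4
  simp only [Matrix.cons_val_zero, Matrix.cons_val_one, Matrix.head_cons] at h3 h4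
  have hu3 : u 3 = 0 := by
    simp [F, p] at h1; linarith
  have hw3 : w 3 = 0 := by
    simp [F, p] at h2; linarith
  have hu0 : u 0 = 0 := by
    simp [G, p] at h3
    rcases h3 with h3 | h3
    · linarith
    · exact absurd h3 hv₂
  have hw0 : w 0 = 0 := by
    simp [G, p] at h4
    rcases h4 with h4 | h4
    · linarith
    · exact absurd h4 hv₂
  intro hLI
  let π : (Fin 4 → ℝ) →ₗ[ℝ] (Fin 2 → ℝ) :=
    { toFun := fun x => ![x 1, x 2]
      map_add' := by
        intro a b; funext i; fin_cases i <;> simp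
      map_smul' := by
        intro c a; funext i; fin_cases i <;> simp }
  let σ : (Fin 2 → ℝ) →ₗ[ℝ] (Fin 4 → ℝ) :=
    { toFun := fun a => ![0, a 0, a 1, 0]
      map_add' := by
        intro a b; funext i; fin_cases i <;> simp
      map_smul' := by
        intro c a; funext i; fin_cases i <;> simp }
  have hcomp : σ ∘ ![π u, π (![0, v₂, 0, 0]), π w] = ![u, ![0, v₂, 0, 0], w] := by
    funext i
    fin_cases i
    · funext j; fin_cases j <;> simp [σ, π, hu0, hu3, Matrix.vecHead, Matrix.vecTail]
    · funext j; fin_cases j <;> simp [σ, π, Matrix.vecHead, Matrix.vecTail]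
    · funext j; fin_cases j <;> simp [σ, π, hw0, hw3, Matrix.vecHead, Matrix.vecTail]
  have hLI2 : LinearIndependent ℝ ![π u, π (![0, v₂, 0, 0]), π w] := by
    apply LinearIndependent.of_comp σ
    rw [hcomp]
    exact hLI
  have hcard := hLI2.fintype_card_le_finrank
  simp [Module.finrank_fintype_fun_eq_card] at hcard
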